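/- Let D_m := (1/2) \sum_{k+l = 2m-2} (-1)^k \partial_{Q_k} \partial_{Q_l} and L_m := \partial_{Q_{2m}} - \sum_{k\ge 0} Q_k \partial_{Q_{k+2m-1}} act on (formal) functions of the variables Q_0, Q_1, .... Then the operators \hbar D_m + L_m commute pairwise for all m \ge 1: [\hbar D_m + L_m, \hbar D_{m'} + L_{m'}] = 0. -/

import Mathlib

open MvPolynomial Finset


namespace Stmt9Aux

abbrev R9 := MvPolynomial ℕ (Polynomial ℚ)

lemma pd_comm (i j : ℕ) (p : R9) : pderiv i (pderiv j p) = pderiv j (pderiv i p) := by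
  induction p using MvPolynomial.induction_on with
  | C a => simp
  | add p q hp hq => simp [hp, hq]
  | mul_X p n ih =>
      simp only [pderiv_mul, pderiv_X, Pi.single_apply, mul_ite, mul_one, mul_zero, map_add,
        apply_ite (pderiv i), apply_ite (pderiv j), map_zero, ih]
      split_ifs <;> ring

lemma pd_qsmul (k : ℕ) (q : ℚ) (x : R9) : pderiv k (q • x) = q • pderiv k x :=
  ((pderiv k : Derivation (Polynomial ℚ) R9 R9)).toLinearMap.map_smul_of_tower q x

/-- `P n p` : all partials with index `≥ n` vanish. -/
def P (n : ℕ) (p : R9) : Prop := ∀ k, n ≤ k → pderiv k p = 0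

lemma exists_P (p : R9) (N : ℕ) : ∃ n, N ≤ n ∧ P n p := by
  refine ⟨max N (p.vars.sup id + 1), le_max_left _ _, fun k hk => ?_⟩
  apply pderiv_eq_zero_of_notMem_vars
  intro hmem
  have : k ≤ p.vars.sup id := Finset.le_sup (f := id) hmem
  have := le_trans (le_max_right N _) hk
  omega

lemma P.add {n : ℕ} {p q : R9} (hp : P n p) (hq : P n q) : P n (p + q) := fun k hk => by
  simp [hp k hk, hq k hk]

lemma P.sub {n : ℕ} {p q : R9} (hp : P n p) (hq : P n q) : P n (p - q) := fun k hk => by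
  simp [hp k hk, hq k hk]

lemma P.pd {n : ℕ} {p : R9} (hp : P n p) (j : ℕ) : P n (pderiv j p) := fun k hk => by
  rw [pd_comm, hp k hk, map_zero]

lemma P.qsmul {n : ℕ} {p : R9} (hp : P n p) (q : ℚ) : P n (q • p) := fun k hk => by
  rw [pd_qsmul, hp k hk, smul_zero]

lemma P.C_mul {n : ℕ} {p : R9} (hp : P n p) (a : Polynomial ℚ) : P n (C a * p) := fun k hk => by
  rw [pderiv_C_mul, hp k hk, mul_zero]

lemma P.sum {ι : Type*} {n : ℕ} {s : Finset ι} {f : ι → R9} (hf : ∀ j ∈ s, P n (f j)) :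
    P n (∑ j ∈ s, f j) := fun k hk => by
  rw [map_sum]
  exact Finset.sum_eq_zero fun j hj => hf j hj k hk

lemma P.X_mul {n j : ℕ} {p : R9} (hp : P n p) (hj : j < n) : P n (X j * p) := fun k hk => by
  rw [pderiv_mul, pderiv_X_of_ne (by omega), hp k hk, zero_mul, mul_zero, add_zero]

/-- truncated shift operator -/
noncomputable def S (c n : ℕ) (p : R9) : R9 := ∑ k ∈ range n, X k * pderiv (k + c) p

noncomputable def DD (m : ℕ) (p : R9) : R9 :=
  (1 / 2 : ℚ) • ∑ x ∈ antidiagonal (2 * m - 2), ((-1 : ℚ) ^ x.1) • pderiv x.1 (pderiv x.2 p)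

noncomputable def LL (m n : ℕ) (p : R9) : R9 := pderiv (2 * m) p - S (2 * m - 1) n p

lemma finsum_eq_S (c n : ℕ) (p : R9) (hp : P n p) :
    (∑ᶠ k : ℕ, X k * pderiv (k + c) p) = S c n p := by
  apply finsum_eq_sum_of_support_subset
  intro k hk
  simp only [Function.mem_support, Finset.coe_range, Set.mem_Iio] at hk ⊢
  by_contra h
  exact hk (by rw [hp (k + c) (by omega), mul_zero])

lemma P.S {n : ℕ} {p : R9} (hp : P n p) (c : ℕ) : P n (Stmt9Aux.S c n p) :=
  P.sum fun j hj => (hp.pd _).X_mul (mem_range.mp hj)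

lemma P.DD {n : ℕ} {p : R9} (hp : P n p) (m : ℕ) : P n (Stmt9Aux.DD m p) := by
  unfold Stmt9Aux.DD
  apply P.qsmul
  apply P.sum
  intro x _
  apply P.qsmul
  exact P.pd (P.pd hp x.2) x.1

lemma P.LL {n : ℕ} {p : R9} (hp : P n p) (m : ℕ) : P n (Stmt9Aux.LL m n p) :=
  (hp.pd _).sub (hp.S _)

end Stmt9Aux

namespace Stmt9Aux

lemma S_add (c n : ℕ) (p q : R9) : S c n (p + q) = S c n p + S c n q := by
  simp [S, mul_add, Finset.sum_add_distrib]

lemma S_C_mul (c n : ℕ) (a : Polynomial ℚ) (p : R9) : S c n (C a * p) = C a * S c n p := by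
  simp [S, pderiv_C_mul, Finset.mul_sum, mul_left_comm]

lemma DD_add (m : ℕ) (p q : R9) : DD m (p + q) = DD m p + DD m q := by
  simp [DD, smul_add, Finset.sum_add_distrib]

lemma DD_C_mul (m : ℕ) (a : Polynomial ℚ) (p : R9) : DD m (C a * p) = C a * DD m p := by
  simp [DD, pderiv_C_mul, mul_smul_comm, Finset.mul_sum]

lemma LL_add (m n : ℕ) (p q : R9) : LL m n (p + q) = LL m n p + LL m n q := by
  simp only [LL, map_add, S_add]; ring

lemma LL_C_mul (m n : ℕ) (a : Polynomial ℚ) (p : R9) : LL m n (C a * p) = C a * LL m n p := by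
  simp only [LL, pderiv_C_mul, S_C_mul, mul_sub]

end Stmt9Aux

namespace Stmt9Aux

lemma neg_one_pow_sub (N a : ℕ) (ha : a ≤ N) (hN : Odd N) : (-1:ℚ)^(N-a) = -(-1:ℚ)^a := by
  rcases Nat.even_or_odd a with h | h
  · rw [h.neg_one_pow, (Nat.Odd.sub_even ha hN h).neg_one_pow]
  · rw [h.neg_one_pow, (Nat.Odd.sub_odd hN h).neg_one_pow]; norm_num

lemma key_le (u v : ℕ) (hu : 1 ≤ u) (huv : u ≤ v) (p : R9) :
    ∑ x ∈ antidiagonal (2*u-2), ((-1:ℚ)^x.1) • pderiv x.1 (pderiv (x.2 + (2*v-1)) p)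
    = ∑ x ∈ antidiagonal (2*v-2), ((-1:ℚ)^x.1) • pderiv x.1 (pderiv (x.2 + (2*u-1)) p) := by
  have hv : 1 ≤ v := le_trans hu huv
  have hNodd : Odd (2*u+2*v-3) := ⟨u+v-2, by omega⟩
  rw [Finset.Nat.sum_antidiagonal_eq_sum_range_succ_mk,
    Finset.Nat.sum_antidiagonal_eq_sum_range_succ_mk]
  have e1 : ∑ a ∈ range (2*u-2+1), ((-1:ℚ)^a) • pderiv a (pderiv ((2*u-2-a) + (2*v-1)) p)
      = ∑ a ∈ range (2*u-1), ((-1:ℚ)^a) • pderiv a (pderiv (2*u+2*v-3-a) p) := by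
    rw [show 2*u-2+1 = 2*u-1 by omega]
    refine Finset.sum_congr rfl fun a ha => ?_
    rw [mem_range] at ha
    rw [show 2*u-2-a + (2*v-1) = 2*u+2*v-3-a from by omega]
  have e2 : ∑ a ∈ range (2*v-2+1), ((-1:ℚ)^a) • pderiv a (pderiv ((2*v-2-a) + (2*u-1)) p)
      = ∑ a ∈ range (2*v-1), ((-1:ℚ)^a) • pderiv a (pderiv (2*u+2*v-3-a) p) := by
    rw [show 2*v-2+1 = 2*v-1 by omega]
    refine Finset.sum_congr rfl fun a ha => ?_
    rw [mem_range] at ha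
    rw [show 2*v-2-a + (2*u-1) = 2*u+2*v-3-a from by omega]
  rw [e1, e2, range_eq_Ico, range_eq_Ico,
    ← Finset.sum_Ico_consecutive _ (Nat.zero_le (2*u-1)) (by omega : 2*u-1 ≤ 2*v-1)]
  have hz : ∑ a ∈ Finset.Ico (2*u-1) (2*v-1), ((-1:ℚ)^a) • pderiv a (pderiv (2*u+2*v-3-a) p) = 0 := by
    refine Finset.sum_involution (fun a _ => 2*u+2*v-3 - a) ?_ ?_ ?_ ?_
    · intro a ha
      rw [mem_Ico] at ha
      rw [neg_one_pow_sub (2*u+2*v-3) a (by omega) hNodd, show 2*u+2*v-3 - (2*u+2*v-3 - a) = a by omega,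
        pd_comm (2*u+2*v-3 - a) a p, neg_smul, add_neg_cancel]
    · intro a ha hne
      rw [mem_Ico] at ha
      obtain ⟨t, ht⟩ := hNodd
      omega
    · intro a ha
      rw [mem_Ico] at ha ⊢
      omega
    · intro a ha
      rw [mem_Ico] at ha
      omega
  rw [hz, add_zero]

lemma key (m m' : ℕ) (hm : 1 ≤ m) (hm' : 1 ≤ m') (p : R9) :
    ∑ x ∈ antidiagonal (2*m-2), ((-1:ℚ)^x.1) • pderiv x.1 (pderiv (x.2 + (2*m'-1)) p)
    = ∑ x ∈ antidiagonal (2*m'-2), ((-1:ℚ)^x.1) • pderiv x.1 (pderiv (x.2 + (2*m-1)) p) := by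
  rcases le_total m m' with h | h
  · exact key_le m m' hm h p
  · exact (key_le m' m hm' h p).symm

end Stmt9Aux

namespace Stmt9Aux

lemma pd_sum_X (i n : ℕ) (g : ℕ → R9) (hg : n ≤ i → g i = 0) :
    pderiv i (∑ k ∈ range n, X k * g k) = g i + ∑ k ∈ range n, X k * pderiv i (g k) := by
  rw [map_sum]
  have h1 : ∀ k ∈ range n, pderiv i (X k * g k)
      = (if k = i then g k else 0) + X k * pderiv i (g k) := by
    intro k _
    rw [pderiv_mul, pderiv_X, Pi.single_apply]
    split_ifs with h <;> simp
  rw [Finset.sum_congr rfl h1, Finset.sum_add_distrib, Finset.sum_ite_eq' (range n) i g]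
  rcases lt_or_ge i n with h | h
  · rw [if_pos (mem_range.mpr h)]
  · rw [if_neg (by simp [mem_range]; omega), hg h]

lemma S_sub (c n : ℕ) (p q : R9) : S c n (p - q) = S c n p - S c n q := by
  simp [S, mul_sub, Finset.sum_sub_distrib]

lemma DD_sub (m : ℕ) (p q : R9) : DD m (p - q) = DD m p - DD m q := by
  simp [DD, smul_sub, Finset.sum_sub_distrib]

lemma DD_pd (m i : ℕ) (p : R9) : DD m (pderiv i p) = pderiv i (DD m p) := by
  unfold DD
  rw [pd_qsmul, map_sum]
  refine congrArg _ (Finset.sum_congr rfl fun x _ => ?_)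
  rw [pd_qsmul, pd_comm x.2 i, pd_comm x.1 i]

lemma DD_qsmul (m : ℕ) (q : ℚ) (p : R9) : DD m (q • p) = q • DD m p := by
  simp only [DD, pd_qsmul, Finset.smul_sum, smul_smul]
  refine Finset.sum_congr rfl fun x _ => ?_
  congr 1
  ring

lemma DD_sum {ι : Type*} (m : ℕ) (s : Finset ι) (f : ι → R9) :
    DD m (∑ j ∈ s, f j) = ∑ j ∈ s, DD m (f j) := by
  simp only [DD, map_sum, Finset.smul_sum]
  rw [Finset.sum_comm]

lemma DD_DD (m m' : ℕ) (p : R9) : DD m (DD m' p) = DD m' (DD m p) := by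
  have h : DD m (DD m' p) = (1/2:ℚ) • ∑ y ∈ antidiagonal (2*m'-2),
      ((-1:ℚ)^y.1) • pderiv y.1 (pderiv y.2 (DD m p)) := by
    conv_lhs => rw [show DD m' p = (1/2:ℚ) • ∑ y ∈ antidiagonal (2*m'-2),
      ((-1:ℚ)^y.1) • pderiv y.1 (pderiv y.2 p) from rfl]
    rw [DD_qsmul, DD_sum]
    exact congrArg (HSMul.hSMul (1/2:ℚ))
      (Finset.sum_congr rfl fun y _ => by rw [DD_qsmul, DD_pd, DD_pd])
  have h2 : DD m' (DD m p) = (1/2:ℚ) • ∑ y ∈ antidiagonal (2*m'-2),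
      ((-1:ℚ)^y.1) • pderiv y.1 (pderiv y.2 (DD m p)) := rfl
  rw [h, h2]

end Stmt9Aux

namespace Stmt9Aux

/-- generalized `L`: `Lg c n p = ∂_{c+1} p - ∑_{k<n} Q_k ∂_{k+c} p` -/
noncomputable def Lg (c n : ℕ) (p : R9) : R9 := pderiv (c + 1) p - S c n p

lemma LL_eq_Lg (m n : ℕ) (hm : 1 ≤ m) (p : R9) : LL m n p = Lg (2*m-1) n p := by
  unfold LL Lg
  rw [show 2*m-1+1 = 2*m from by omega]

lemma pd_S (i c n : ℕ) (p : R9) (hp : P n p) :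
    pderiv i (S c n p) = pderiv (i + c) p + ∑ k ∈ range n, X k * pderiv i (pderiv (k + c) p) :=
  pd_sum_X i n (fun k => pderiv (k + c) p) (fun h => hp (i + c) (by omega))

lemma S_S (c c' n : ℕ) (p : R9) (hp : P n p) :
    S c n (S c' n p) = (∑ j ∈ range n, X j * pderiv (j + c + c') p)
      + ∑ j ∈ range n, ∑ k ∈ range n, X j * (X k * pderiv (j + c) (pderiv (k + c') p)) := by
  unfold S
  rw [← Finset.sum_add_distrib]
  refine Finset.sum_congr rfl fun j _ => ?_
  rw [show (∑ k ∈ range n, X k * pderiv (k + c') p) = S c' n p from rfl,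
    pd_S (j + c) c' n p hp, mul_add, Finset.mul_sum]

lemma Lg_expand (c c' n : ℕ) (hcn : c + 1 < n) (p : R9) (hp : P n p) :
    Lg c n (Lg c' n p) =
      pderiv (c+1) (pderiv (c'+1) p) - pderiv (c+1+c') p
      - (∑ k ∈ range n, X k * pderiv (c+1) (pderiv (k+c') p))
      - (∑ j ∈ range n, X j * pderiv (j+c) (pderiv (c'+1) p))
      + (∑ j ∈ range n, X j * pderiv (j+c+c') p)
      + ∑ j ∈ range n, ∑ k ∈ range n, X j * (X k * pderiv (j+c) (pderiv (k+c') p)) := by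
  unfold Lg
  rw [map_sub, S_sub, pd_S (c+1) c' n p hp, S_S c c' n p hp,
    show S c n (pderiv (c'+1) p) = ∑ j ∈ range n, X j * pderiv (j+c) (pderiv (c'+1) p) from rfl]
  abel

lemma Lg_comm (c c' n : ℕ) (hcn : c + 1 < n) (hc'n : c' + 1 < n) (p : R9) (hp : P n p) :
    Lg c n (Lg c' n p) = Lg c' n (Lg c n p) := by
  rw [Lg_expand c c' n hcn p hp, Lg_expand c' c n hc'n p hp]
  rw [pd_comm (c+1) (c'+1) p, show c+1+c' = c'+1+c from by omega]
  have h3 : ∑ k ∈ range n, X k * pderiv (c+1) (pderiv (k+c') p)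
      = ∑ k ∈ range n, X k * pderiv (k+c') (pderiv (c+1) p) :=
    Finset.sum_congr rfl fun k _ => by rw [pd_comm]
  have h4 : ∑ j ∈ range n, X j * pderiv (j+c) (pderiv (c'+1) p)
      = ∑ j ∈ range n, X j * pderiv (c'+1) (pderiv (j+c) p) :=
    Finset.sum_congr rfl fun j _ => by rw [pd_comm]
  have h5 : ∑ j ∈ range n, X j * pderiv (j+c+c') p
      = ∑ j ∈ range n, X j * pderiv (j+c'+c) p :=
    Finset.sum_congr rfl fun j _ => by rw [show j+c+c' = j+c'+c from by omega]
  have h6 : ∑ j ∈ range n, ∑ k ∈ range n, X j * (X k * pderiv (j+c) (pderiv (k+c') p))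
      = ∑ j ∈ range n, ∑ k ∈ range n, X j * (X k * pderiv (j+c') (pderiv (k+c) p)) := by
    rw [Finset.sum_comm]
    refine Finset.sum_congr rfl fun j _ => Finset.sum_congr rfl fun k _ => ?_
    rw [pd_comm]
    ring
  rw [h3, h4, h5, h6]
  abel

end Stmt9Aux

namespace Stmt9Aux

lemma neg_one_pow_eq_of_even_add {a b : ℕ} (h : Even (a + b)) : (-1:ℚ)^a = (-1:ℚ)^b := by
  rcases Nat.even_or_odd a with h' | h'
  · rw [h'.neg_one_pow, ((Nat.even_add.mp h).mp h').neg_one_pow]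
  · have hb : Odd b := by
      rcases Nat.even_or_odd b with hb | hb
      · exact absurd ((Nat.even_add.mp h).mpr hb) (by simpa using h')
      · exact hb
    rw [h'.neg_one_pow, hb.neg_one_pow]

lemma swapB (m c : ℕ) (p : R9) :
    ∑ x ∈ antidiagonal (2*m-2), ((-1:ℚ)^x.1) • pderiv x.2 (pderiv (x.1+c) p)
    = ∑ x ∈ antidiagonal (2*m-2), ((-1:ℚ)^x.1) • pderiv x.1 (pderiv (x.2+c) p) := by
  have hsw := Finset.Nat.sum_antidiagonal_swap (n := 2*m-2)
    (f := fun x : ℕ × ℕ => ((-1:ℚ)^x.2) • pderiv x.1 (pderiv (x.2+c) p))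
  simp only [Prod.fst_swap, Prod.snd_swap] at hsw
  rw [hsw]
  refine Finset.sum_congr rfl fun x hx => ?_
  rw [Finset.HasAntidiagonal.mem_antidiagonal] at hx
  rw [neg_one_pow_eq_of_even_add (a := x.2) (b := x.1) ⟨m-1, by omega⟩]

lemma S_DD (c n m : ℕ) (p : R9) :
    S c n (DD m p) = (1/2:ℚ) • ∑ x ∈ antidiagonal (2*m-2), ((-1:ℚ)^x.1) •
      ∑ k ∈ range n, X k * pderiv x.1 (pderiv x.2 (pderiv (k+c) p)) := by
  unfold S
  have hterm : ∀ k, X k * pderiv (k+c) (DD m p) = (1/2:ℚ) • ∑ x ∈ antidiagonal (2*m-2),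
      ((-1:ℚ)^x.1) • (X k * pderiv x.1 (pderiv x.2 (pderiv (k+c) p))) := by
    intro k
    rw [← DD_pd m (k+c) p]
    show X k * DD m (pderiv (k+c) p) = _
    unfold DD
    rw [mul_smul_comm, Finset.mul_sum]
    congr 1
    exact Finset.sum_congr rfl fun x _ => mul_smul_comm _ _ _
  rw [Finset.sum_congr rfl (fun k _ => hterm k), ← Finset.smul_sum, Finset.sum_comm]
  congr 1
  exact Finset.sum_congr rfl fun x _ => (Finset.smul_sum).symm

lemma DD_S (m c n : ℕ) (p : R9) (hp : P n p) (hmn : 2*m < n) :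
    DD m (S c n p) = (∑ x ∈ antidiagonal (2*m-2), ((-1:ℚ)^x.1) • pderiv x.1 (pderiv (x.2+c) p))
      + S c n (DD m p) := by
  have hx12 : ∀ x ∈ antidiagonal (2*m-2), pderiv x.1 (pderiv x.2 (S c n p))
      = pderiv x.1 (pderiv (x.2+c) p) + (pderiv x.2 (pderiv (x.1+c) p)
        + ∑ k ∈ range n, X k * pderiv x.1 (pderiv x.2 (pderiv (k+c) p))) := by
    intro x hx
    rw [Finset.HasAntidiagonal.mem_antidiagonal] at hx
    rw [pd_S x.2 c n p hp, map_add,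
      pd_sum_X x.1 n (fun k => pderiv x.2 (pderiv (k+c) p)) (fun h => absurd h (by omega))]
  have step : DD m (S c n p) = (1/2:ℚ) • ∑ x ∈ antidiagonal (2*m-2), (((-1:ℚ)^x.1) •
        pderiv x.1 (pderiv (x.2+c) p) + (((-1:ℚ)^x.1) • pderiv x.2 (pderiv (x.1+c) p)
        + ((-1:ℚ)^x.1) • ∑ k ∈ range n, X k * pderiv x.1 (pderiv x.2 (pderiv (k+c) p)))) := by
    unfold DD
    exact congrArg (HSMul.hSMul (1/2:ℚ)) (Finset.sum_congr rfl fun x hx => by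
      rw [hx12 x hx, smul_add, smul_add])
  rw [step, Finset.sum_add_distrib, Finset.sum_add_distrib, smul_add, smul_add, swapB m c p,
    S_DD c n m p, ← add_assoc, ← add_smul]
  norm_num

lemma DL_comm (m m' n : ℕ) (hm : 1 ≤ m) (hm' : 1 ≤ m') (hmn : 2*m < n) (hm'n : 2*m' < n)
    (p : R9) (hp : P n p) :
    DD m (LL m' n p) + LL m n (DD m' p) = DD m' (LL m n p) + LL m' n (DD m p) := by
  unfold LL
  rw [DD_sub, DD_sub, DD_S m (2*m'-1) n p hp hmn, DD_S m' (2*m-1) n p hp hm'n,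
    DD_pd m (2*m') p, DD_pd m' (2*m) p, key m m' hm hm' p]
  abel

end Stmt9Aux

namespace Stmt9Aux

lemma LL_comm (m m' n : ℕ) (hm : 1 ≤ m) (hm' : 1 ≤ m') (hmn : 2*m < n) (hm'n : 2*m' < n)
    (p : R9) (hp : P n p) : LL m n (LL m' n p) = LL m' n (LL m n p) := by
  rw [LL_eq_Lg m' n hm' p, LL_eq_Lg m n hm p, LL_eq_Lg m n hm (Lg (2*m'-1) n p),
    LL_eq_Lg m' n hm' (Lg (2*m-1) n p)]
  exact Lg_comm _ _ n (by omega) (by omega) p hp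

end Stmt9Aux


open Stmt9Aux

/-- the operators `ħ D_m + L_m` with
`D_m = (1/2) ∑_{k+l=2m-2} (-1)^k ∂_{Q_k} ∂_{Q_l}` and
`L_m = ∂_{Q_{2m}} - ∑_k Q_k ∂_{Q_{k+2m-1}}` commute pairwise (acting on
polynomials in `Q_0, Q_1, ...` over `ℚ[ħ]`, `ħ` central). -/
theorem stmt9
    (hbar : MvPolynomial ℕ (Polynomial ℚ))
    (hhbar : hbar = MvPolynomial.C Polynomial.X)
    (D L Op : ℕ → MvPolynomial ℕ (Polynomial ℚ) → MvPolynomial ℕ (Polynomial ℚ))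
    (hD : ∀ m p, D m p = (1 / 2 : ℚ) •
      ∑ x ∈ Finset.HasAntidiagonal.antidiagonal (2 * m - 2),
        ((-1 : ℚ) ^ x.1) • pderiv x.1 (pderiv x.2 p))
    (hL : ∀ m p, L m p =
      pderiv (2 * m) p - ∑ᶠ k : ℕ, X k * pderiv (k + (2 * m - 1)) p)
    (hOp : ∀ m p, Op m p = hbar * D m p + L m p) :
    ∀ m m' : ℕ, 1 ≤ m → 1 ≤ m' →
      ∀ p, Op m (Op m' p) = Op m' (Op m p) := by
  intro m m' hm hm' p
  obtain ⟨n, hn, hp⟩ := exists_P p (2*m + 2*m' + 2)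
  have hDeq : ∀ μ q, D μ q = DD μ q := fun μ q => by rw [hD]; rfl
  have hLeq : ∀ μ q, P n q → L μ q = LL μ n q := fun μ q hq => by
    rw [hL, finsum_eq_S (2*μ-1) n q hq]; rfl
  have hPA : ∀ μ, P n (hbar * DD μ p + LL μ n p) := fun μ => by
    rw [hhbar]; exact ((hp.DD μ).C_mul _).add (hp.LL μ)
  have hOpeq : ∀ μ q, P n q → Op μ q = hbar * DD μ q + LL μ n q :=
    fun μ q hq => by rw [hOp, hDeq, hLeq μ q hq]
  rw [hOpeq m' p hp, hOpeq m p hp, hOpeq m _ (hPA m'), hOpeq m' _ (hPA m), hhbar]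
  simp only [DD_add, LL_add, DD_C_mul, LL_C_mul]
  linear_combination (C Polynomial.X * C Polynomial.X : R9) * DD_DD m m' p
    + (C Polynomial.X : R9) * DL_comm m m' n hm hm' (by omega) (by omega) p hp
    + LL_comm m m' n hm hm' (by omega) (by omega) p hp
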